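/- A minimal compact leafwise-Riemannian foliated space (one with no proper nonempty closed saturated subset) is harmonically simple: every continuous leafwise harmonic function on it is constant on every leaf. -/

import Mathlib

open Complex Metric Set

noncomputable section

def uD : Set ℂ := Metric.ball 0 1

/-- Laplacian of a real-valued function on ℂ. -/
def lapR (f : ℂ → ℝ) (z : ℂ) : ℝ :=
  fderiv ℝ (fun w => fderiv ℝ f w 1) z 1 +
    fderiv ℝ (fun w => fderiv ℝ f w Complex.I) z Complex.I

/-- `g` is harmonic on the unit disc (real valued).  Since leaves are 2-dimensional and
harmonicity is conformally invariant in dimension 2, leafwise harmonicity on a foliated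
space with leaves uniformized by the disc is expressed by Euclidean harmonicity of the
pullbacks to the disc. -/
def IsHarmRD (g : ℂ → ℝ) : Prop :=
  ContDiffOn ℝ 2 g uD ∧ ∀ z ∈ uD, lapR g z = 0

lemma isOpen_uD : IsOpen uD := isOpen_ball

/-- The "complex gradient" `∂g/∂x - i ∂g/∂y`. -/
def hfun (g : ℂ → ℝ) (z : ℂ) : ℂ :=
  ((fderiv ℝ g z 1 : ℝ) : ℂ) - ((fderiv ℝ g z Complex.I : ℝ) : ℂ) * Complex.I

lemma hfun_diff {g : ℂ → ℝ} (hg : IsHarmRD g) {z : ℂ} (hz : z ∈ uD) :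
    DifferentiableAt ℂ (hfun g) z := by
  have hz2 : ContDiffAt ℝ 2 g z := hg.1.contDiffAt (isOpen_uD.mem_nhds hz)
  have hsymm : IsSymmSndFDerivAt ℝ g z := hz2.isSymmSndFDerivAt (by norm_num)
  have hd1 : ContDiffAt ℝ 1 (fderiv ℝ g) z := hz2.fderiv_right (by norm_num)
  have hB : HasFDerivAt (fderiv ℝ g) (fderiv ℝ (fderiv ℝ g) z) z :=
    (hd1.differentiableAt one_ne_zero).hasFDerivAt
  set B := fderiv ℝ (fderiv ℝ g) z with hBdef
  -- derivative of z ↦ fderiv g z v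
  have happ : ∀ v : ℂ, HasFDerivAt (fun w => fderiv ℝ g w v)
      ((ContinuousLinearMap.apply ℝ ℝ v).comp B) z := fun v =>
    (ContinuousLinearMap.apply ℝ ℝ v).hasFDerivAt.comp z hB
  -- derivative of hfun g
  have h1 : HasFDerivAt (fun w => ((fderiv ℝ g w 1 : ℝ) : ℂ))
      (Complex.ofRealCLM.comp ((ContinuousLinearMap.apply ℝ ℝ (1:ℂ)).comp B)) z :=
    Complex.ofRealCLM.hasFDerivAt.comp z (happ 1)
  have h2 : HasFDerivAt (fun w => ((fderiv ℝ g w Complex.I : ℝ) : ℂ) * Complex.I)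
      (Complex.I • (Complex.ofRealCLM.comp ((ContinuousLinearMap.apply ℝ ℝ (Complex.I)).comp B))) z := by
    have := (Complex.ofRealCLM.hasFDerivAt.comp z (happ Complex.I)).const_mul Complex.I
    simpa [mul_comm] using this
  have hL : HasFDerivAt (hfun g)
      (Complex.ofRealCLM.comp ((ContinuousLinearMap.apply ℝ ℝ (1:ℂ)).comp B)
        - Complex.I • (Complex.ofRealCLM.comp ((ContinuousLinearMap.apply ℝ ℝ (Complex.I)).comp B))) z := by
    exact h1.sub h2
  set L := Complex.ofRealCLM.comp ((ContinuousLinearMap.apply ℝ ℝ (1:ℂ)).comp B)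
        - Complex.I • (Complex.ofRealCLM.comp ((ContinuousLinearMap.apply ℝ ℝ (Complex.I)).comp B)) with hLdef
  have hLw : ∀ w : ℂ, L w = ((B w 1 : ℝ) : ℂ) - Complex.I * ((B w Complex.I : ℝ) : ℂ) := by
    intro w
    simp [hLdef, ContinuousLinearMap.apply]
  -- Laplace equation
  have hlap : B 1 1 + B Complex.I Complex.I = 0 := by
    have := hg.2 z hz
    rw [lapR] at this
    have e1 : fderiv ℝ (fun w => fderiv ℝ g w 1) z = (ContinuousLinearMap.apply ℝ ℝ (1:ℂ)).comp B :=
      (happ 1).fderiv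
    have e2 : fderiv ℝ (fun w => fderiv ℝ g w Complex.I) z = (ContinuousLinearMap.apply ℝ ℝ (Complex.I)).comp B :=
      (happ Complex.I).fderiv
    rw [e1, e2] at this
    simpa [ContinuousLinearMap.apply] using this
  have hsym : B Complex.I 1 = B 1 Complex.I := hsymm Complex.I 1
  -- complex linearity: L w = w * d
  set d : ℂ := ((B 1 1 : ℝ) : ℂ) - Complex.I * ((B 1 Complex.I : ℝ) : ℂ) with hddef
  have hlin : ∀ w : ℂ, L w = w * d := by
    intro w
    have hw : w = w.re • (1:ℂ) + w.im • Complex.I := by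
      simp [Complex.real_smul]
    have hBw : B w = w.re • B 1 + w.im • B Complex.I := by
      conv_lhs => rw [hw]
      rw [map_add, map_smul, map_smul]
    have hII : B Complex.I Complex.I = - B 1 1 := by linarith [hlap]
    rw [hLw w, hBw]
    simp only [ContinuousLinearMap.add_apply, ContinuousLinearMap.smul_apply, smul_eq_mul]
    push_cast
    rw [hsym, hII]
    push_cast
    apply Complex.ext <;> simp [hddef, Complex.ext_iff] <;> ring
  rw [differentiableAt_iff_restrictScalars ℝ hL.differentiableAt]
  refine ⟨ContinuousLinearMap.smulRight (1 : ℂ →L[ℂ] ℂ) d, ?_⟩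
  have : fderiv ℝ (hfun g) z = L := hL.fderiv
  rw [this]
  ext w
  simpa [smul_eq_mul, mul_comm] using (hlin w).symm

lemma hfun_contOn {g : ℂ → ℝ} (hg : IsHarmRD g) : ContinuousOn (hfun g) uD :=
  fun _ hz => (hfun_diff hg hz).continuousAt.continuousWithinAt

lemma g_hasFDerivAt {g : ℂ → ℝ} (hg : IsHarmRD g) {p : ℂ} (hp : p ∈ uD) :
    HasFDerivAt g (fderiv ℝ g p) p :=
  ((hg.1.contDiffAt (isOpen_uD.mem_nhds hp)).differentiableAt (by norm_num)).hasFDerivAt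

lemma deriv_along {g : ℂ → ℝ} (hg : IsHarmRD g) {a ω : ℂ} {t : ℝ}
    (ht : a + t • ω ∈ uD) :
    HasDerivAt (fun t : ℝ => g (a + t • ω)) ((ω * hfun g (a + t • ω)).re) t := by
  have hγ : HasDerivAt (fun t : ℝ => a + t • ω) ω t := by
    simpa using ((hasDerivAt_id t).smul_const ω).const_add a
  have := (g_hasFDerivAt hg ht).comp_hasDerivAt t hγ
  refine this.congr_deriv ?_
  set p := a + t • ω
  set L := fderiv ℝ g p
  have hω : ω = ω.re • (1:ℂ) + ω.im • Complex.I := by simp [Complex.real_smul]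
  have : L ω = ω.re * L 1 + ω.im * L Complex.I := by
    conv_lhs => rw [hω]
    rw [map_add, map_smul, map_smul]; simp
  rw [this]
  simp [hfun, Complex.mul_re]
  rfl

open MeasureTheory in
lemma cont_eq_zero_of_ae {W : ℝ → ℝ} (hW : Continuous W) {b : ℝ} (hb : 0 < b)
    (hae : W =ᵐ[volume.restrict (Set.Ioc 0 b)] 0) : ∀ θ ∈ Icc 0 b, W θ = 0 := by
  intro θ₀ hθ₀
  by_contra hne
  have hopen : IsOpen {θ : ℝ | W θ ≠ 0} := isOpen_ne.preimage hW
  obtain ⟨ε, hε, hball⟩ := Metric.isOpen_iff.1 hopen θ₀ hne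
  set J : Set ℝ := Ioo (max 0 (θ₀ - ε)) (min b (θ₀ + ε)) with hJ
  have hJne : max 0 (θ₀ - ε) < min b (θ₀ + ε) := by
    rcases hθ₀ with ⟨h0, h1⟩
    apply max_lt <;> apply lt_min <;> linarith
  have hae' : ∀ᵐ θ ∂(volume : Measure ℝ), θ ∈ Set.Ioc 0 b → W θ = 0 :=
    (ae_restrict_iff' measurableSet_Ioc).1 hae
  have hnull : volume {θ : ℝ | ¬ (θ ∈ Set.Ioc 0 b → W θ = 0)} = 0 := hae'
  have hsub : J ⊆ {θ : ℝ | ¬ (θ ∈ Set.Ioc 0 b → W θ = 0)} := by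
    intro θ hθ
    rcases hθ with ⟨hl, hr⟩
    have h1 : θ ∈ Set.Ioc 0 b := ⟨lt_of_le_of_lt (le_max_left _ _) hl, le_of_lt (lt_of_lt_of_le hr (min_le_left _ _))⟩
    have h2 : θ ∈ Metric.ball θ₀ ε := by
      rw [Real.ball_eq_Ioo]
      constructor
      · exact lt_of_le_of_lt (le_max_right _ _) hl
      · exact lt_of_lt_of_le hr (min_le_right _ _)
    exact fun h => (hball h2) (h h1)
  have : volume J = 0 := measure_mono_null hsub hnull
  rw [hJ, Real.volume_Ioo] at this
  have h2 := ENNReal.ofReal_eq_zero.1 this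
  linarith [sub_pos.2 hJne]

open MeasureTheory in
lemma circle_max {g : ℂ → ℝ} (hg : IsHarmRD g) {a : ℂ} {s : ℝ} (hs : 0 < s)
    (hcb : closedBall a s ⊆ uD) (hle : ∀ z ∈ uD, g z ≤ g a) :
    ∀ θ ∈ Icc (0:ℝ) (2*Real.pi), g (a + s • Complex.exp (θ * Complex.I)) = g a := by
  have hπ : (0:ℝ) < 2 * Real.pi := by positivity
  set ω : ℝ → ℂ := fun θ => Complex.exp (θ * Complex.I) with hω
  set pt : ℝ → ℝ → ℂ := fun θ t => a + t • ω θ with hpt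
  have habs : ∀ θ, ‖ω θ‖ = 1 := fun θ => Complex.norm_exp_ofReal_mul_I θ
  have hmem : ∀ (θ : ℝ) (t : ℝ), t ∈ Icc (0:ℝ) s → pt θ t ∈ closedBall a s := by
    intro θ t ht
    rw [mem_closedBall, dist_eq_norm, hpt]
    simp only [add_sub_cancel_left]
    rw [norm_smul, Real.norm_eq_abs, habs θ, mul_one,
      _root_.abs_of_nonneg ht.1]
    exact ht.2
  set F : ℝ → ℝ → ℝ := fun θ t => (ω θ * hfun g (pt θ t)).re with hF
  -- joint continuity
  have hωc : Continuous fun p : ℝ × ℝ => ω p.1 := by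
    apply Complex.continuous_exp.comp
    exact (Complex.continuous_ofReal.comp continuous_fst).mul continuous_const
  have hΦc : Continuous fun p : ℝ × ℝ => pt p.1 p.2 :=
    continuous_const.add (continuous_snd.smul hωc)
  have hFcont : ContinuousOn (Function.uncurry F) (Icc (0:ℝ) (2*Real.pi) ×ˢ Icc (0:ℝ) s) := by
    apply Complex.continuous_re.comp_continuousOn
    apply ContinuousOn.mul hωc.continuousOn
    apply (hfun_contOn hg).comp hΦc.continuousOn
    intro p hp
    exact hcb (hmem p.1 p.2 hp.2)
  -- FTC along rays
  have hFTC : ∀ θ ∈ Icc (0:ℝ) (2*Real.pi),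
      (∫ t in (0:ℝ)..s, F θ t) = g (pt θ s) - g a := by
    intro θ hθ
    have hder : ∀ t ∈ uIcc (0:ℝ) s, HasDerivAt (fun t => g (pt θ t)) (F θ t) t := by
      intro t ht
      rw [uIcc_of_le hs.le] at ht
      exact deriv_along hg (hcb (hmem θ t ht))
    have hint : IntervalIntegrable (F θ) volume 0 s := by
      apply ContinuousOn.intervalIntegrable
      have : ContinuousOn (fun t : ℝ => Function.uncurry F (θ, t)) (uIcc (0:ℝ) s) := by
        apply hFcont.comp (Continuous.continuousOn (by continuity))
        intro t ht
        rw [uIcc_of_le hs.le] at ht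
        exact ⟨hθ, ht⟩
      exact this
    have := intervalIntegral.integral_eq_sub_of_hasDerivAt hder hint
    rw [this]
    simp [hpt]
  set W : ℝ → ℝ := fun θ => g a - g (pt θ s) with hW2
  have hWcont : Continuous W := by
    apply continuous_const.sub
    have hωc1 : Continuous ω := by
      apply Complex.continuous_exp.comp
      exact Complex.continuous_ofReal.mul continuous_const
    apply hg.1.continuousOn.comp_continuous
    · exact continuous_const.add (hωc1.const_smul s)
    · exact fun θ => hcb (hmem θ s ⟨hs.le, le_rfl⟩)
  have hWnn : ∀ θ, 0 ≤ W θ := fun θ =>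
    sub_nonneg.2 (hle _ (hcb (hmem θ s ⟨hs.le, le_rfl⟩)))
  have hωc1 : Continuous ω := by
    apply Complex.continuous_exp.comp
    exact Complex.continuous_ofReal.mul continuous_const
  -- inner integral vanishes (Cauchy-Goursat)
  have hinner0 : ∀ t ∈ Set.Ioc (0:ℝ) s, (∫ θ in Set.Ioc (0:ℝ) (2*Real.pi), F θ t) = 0 := by
    intro t ht
    have hsub : closedBall a t ⊆ uD := (closedBall_subset_closedBall ht.2).trans hcb
    have hcirc : (∮ z in C(a, t), hfun g z) = 0 := by
      apply circleIntegral_eq_zero_of_differentiable_on_off_countable ht.1.le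
        countable_empty ((hfun_contOn hg).mono hsub)
      intro z hz
      exact hfun_diff hg (hsub (ball_subset_closedBall hz.1))
    have hexp : (∮ z in C(a, t), hfun g z)
        = ∫ θ in (0:ℝ)..2*Real.pi, ((t:ℂ) * Complex.I) * (ω θ * hfun g (pt θ t)) := by
      apply intervalIntegral.integral_congr
      intro θ _
      show deriv (circleMap a t) θ • hfun g (circleMap a t θ) = _
      rw [deriv_circleMap]
      have h1 : circleMap a t θ = pt θ t := by
        simp [circleMap, hpt, hω, Complex.real_smul]
      have h2 : circleMap 0 t θ = (t:ℂ) * ω θ := by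
        simp [circleMap, hω]
      rw [h1, h2, smul_eq_mul]
      ring
    have hci : Continuous fun θ => ω θ * hfun g (pt θ t) := by
      apply hωc1.mul
      apply (hfun_contOn hg).comp_continuous
      · exact continuous_const.add (hωc1.const_smul t)
      · exact fun θ => hcb (hmem θ t ⟨ht.1.le, ht.2⟩)
    have hc0 : (∫ θ in (0:ℝ)..2*Real.pi, ω θ * hfun g (pt θ t)) = 0 := by
      rw [hexp, intervalIntegral.integral_const_mul] at hcirc
      have htI : ((t:ℂ) * Complex.I) ≠ 0 := by
        simp [Complex.ext_iff]
        exact ne_of_gt ht.1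
      exact (mul_eq_zero.1 hcirc).resolve_left htI
    have hre : (∫ θ in (0:ℝ)..2*Real.pi, F θ t) = 0 := by
      have := Complex.reCLM.intervalIntegral_comp_comm
        (hci.intervalIntegrable (μ := volume) (0:ℝ) (2*Real.pi))
      rw [hF]
      show (∫ θ in (0:ℝ)..2*Real.pi, Complex.reCLM (ω θ * hfun g (pt θ t))) = 0
      rw [this, hc0]
      simp
    rw [← intervalIntegral.integral_of_le hπ.le]
    exact hre
  -- Fubini
  have hf_int : Integrable (Function.uncurry F)
      ((volume.restrict (Set.Ioc (0:ℝ) (2*Real.pi))).prod (volume.restrict (Set.Ioc (0:ℝ) s))) := by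
    rw [MeasureTheory.Measure.prod_restrict, ← MeasureTheory.Measure.volume_eq_prod]
    exact (hFcont.integrableOn_compact (isCompact_Icc.prod isCompact_Icc)).mono_set
      (Set.prod_mono Set.Ioc_subset_Icc_self Set.Ioc_subset_Icc_self)
  have hswap := MeasureTheory.integral_integral_swap hf_int
  have hdouble : (∫ θ in (0:ℝ)..2*Real.pi, ∫ t in (0:ℝ)..s, F θ t) = 0 := by
    rw [intervalIntegral.integral_of_le hπ.le]
    have h1 : ∀ θ : ℝ, (∫ t in (0:ℝ)..s, F θ t) = ∫ t in Set.Ioc (0:ℝ) s, F θ t :=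
      fun θ => intervalIntegral.integral_of_le hs.le
    simp_rw [h1]
    rw [hswap]
    rw [MeasureTheory.setIntegral_congr_fun measurableSet_Ioc
      (fun t ht => hinner0 t ht : Set.EqOn (fun t => ∫ θ in Set.Ioc (0:ℝ) (2*Real.pi), F θ t) 0 (Set.Ioc 0 s))]
    simp
  have hWint : (∫ θ in (0:ℝ)..2*Real.pi, W θ) = 0 := by
    have hEqOn : Set.EqOn W (fun θ => -(∫ t in (0:ℝ)..s, F θ t)) (uIcc (0:ℝ) (2*Real.pi)) := by
      intro θ hθ
      rw [uIcc_of_le hπ.le] at hθ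
      rw [hW2]
      simp only
      rw [hFTC θ hθ]
      ring
    rw [intervalIntegral.integral_congr hEqOn, intervalIntegral.integral_neg, hdouble, neg_zero]
  have hae : W =ᵐ[volume.restrict (Set.Ioc (0:ℝ) (2*Real.pi))] 0 := by
    have h0 : Set.Ioc (2*Real.pi) (0:ℝ) = ∅ := Set.Ioc_eq_empty (by linarith)
    have := (intervalIntegral.integral_eq_zero_iff_of_nonneg_ae
      (Filter.Eventually.of_forall (fun θ => hWnn θ)) (hWcont.intervalIntegrable _ _)).1 hWint
    rwa [h0, Set.union_empty] at this
  intro θ hθ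
  have := cont_eq_zero_of_ae hWcont hπ hae θ hθ
  rw [hW2] at this
  simp only at this
  have : g (pt θ s) = g a := by linarith
  exact this

lemma key_ball {g : ℂ → ℝ} (hg : IsHarmRD g) {a : ℂ} (ha : a ∈ uD)
    (hmax : ∀ w ∈ uD, g w ≤ g a) :
    ∀ z ∈ ball a ((1 - ‖a‖)/2), g z = g a := by
  have haD : ‖a‖ < 1 := by
    simpa using mem_ball_zero_iff.1 ha
  intro z hz
  rcases eq_or_ne z a with rfl | hne
  · rfl
  set s := dist z a with hsdef
  have hs : 0 < s := dist_pos.2 hne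
  have hslt : s < (1 - ‖a‖)/2 := mem_ball.1 hz
  have hcb : closedBall a s ⊆ uD := by
    intro w hw
    have h1 : dist w (0:ℂ) ≤ dist w a + dist a 0 := dist_triangle _ _ _
    have h2 : dist a (0:ℂ) = ‖a‖ := by
      simp [Complex.dist_eq]
    rw [mem_closedBall] at hw
    rw [uD, mem_ball]
    rw [h2] at h1
    calc dist w 0 ≤ dist w a + ‖a‖ := h1
      _ < 1 := by linarith
  have hcm := circle_max hg hs hcb hmax
  set φ := Complex.arg (z - a) with hφ
  have hφ1 : φ ≤ Real.pi := Complex.arg_le_pi _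
  have hφ2 : -Real.pi < φ := Complex.neg_pi_lt_arg _
  have hπ := Real.pi_pos
  set θ := if 0 ≤ φ then φ else φ + 2*Real.pi with hθdef
  have hθmem : θ ∈ Icc (0:ℝ) (2*Real.pi) := by
    rw [hθdef]
    split_ifs with h
    · exact ⟨h, by linarith⟩
    · push_neg at h
      exact ⟨by linarith, by linarith⟩
  have hexp : Complex.exp (θ * Complex.I) = Complex.exp (φ * Complex.I) := by
    rw [hθdef]
    split_ifs with h
    · rfl
    · push_cast
      rw [add_mul, Complex.exp_add]
      have : Complex.exp (2 * Real.pi * Complex.I) = 1 := Complex.exp_two_pi_mul_I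
      rw [this, mul_one]
  have hzeq : a + s • Complex.exp (θ * Complex.I) = z := by
    rw [hexp, Complex.real_smul, hsdef, Complex.dist_eq, hφ]
    rw [Complex.norm_mul_exp_arg_mul_I]
    ring
  have := hcm θ hθmem
  rwa [hzeq] at this

lemma harm_eqOn_max {g : ℂ → ℝ} (hg : IsHarmRD g) (hle : ∀ z ∈ uD, g z ≤ g 0) :
    ∀ z ∈ uD, g z = g 0 := by
  set U : Set ℂ := {z | z ∈ uD ∧ g z = g 0} with hU
  have h0D : (0:ℂ) ∈ uD := mem_ball_self one_pos
  have hUopen : IsOpen U := by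
    rw [Metric.isOpen_iff]
    intro a ⟨haD, hag⟩
    have haD' : ‖a‖ < 1 := by
      simpa using mem_ball_zero_iff.1 haD
    refine ⟨(1 - ‖a‖)/2, by linarith, ?_⟩
    intro z hz
    have hzD : z ∈ uD := by
      have h1 : dist z (0:ℂ) ≤ dist z a + dist a 0 := dist_triangle _ _ _
      have h2 : dist a (0:ℂ) = ‖a‖ := by simp [Complex.dist_eq]
      rw [uD, mem_ball]
      rw [h2] at h1
      have := mem_ball.1 hz
      calc dist z 0 ≤ dist z a + ‖a‖ := h1
        _ < 1 := by linarith
    have hmax : ∀ w ∈ uD, g w ≤ g a := fun w hw => hag ▸ hle w hw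
    exact ⟨hzD, (key_ball hg haD hmax z hz).trans hag⟩
  have hVopen : IsOpen (uD ∩ g ⁻¹' (Iio (g 0))) :=
    hg.1.continuousOn.isOpen_inter_preimage isOpen_uD isOpen_Iio
  have hpre : IsPreconnected uD := (convex_ball (0:ℂ) 1).isPreconnected
  by_contra hcon
  push_neg at hcon
  obtain ⟨z₀, hz₀D, hz₀⟩ := hcon
  have hcover : uD ⊆ U ∪ (uD ∩ g ⁻¹' (Iio (g 0))) := by
    intro w hw
    rcases eq_or_lt_of_le (hle w hw) with h | h
    · exact Or.inl ⟨hw, h⟩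
    · exact Or.inr ⟨hw, h⟩
  have h1 : (uD ∩ U).Nonempty := ⟨0, h0D, h0D, rfl⟩
  have h2 : (uD ∩ (uD ∩ g ⁻¹' (Iio (g 0)))).Nonempty :=
    ⟨z₀, hz₀D, hz₀D, lt_of_le_of_ne (hle z₀ hz₀D) hz₀⟩
  obtain ⟨w, _, ⟨_, hw1⟩, _, hw2⟩ := hpre U _ hUopen hVopen hcover h1 h2
  exact absurd hw1 (ne_of_lt hw2)

section Foliated

variable {M : Type} [TopologicalSpace M]

/-- A set is saturated for the leaf equivalence relation. -/
def Saturated (leafRel : M → M → Prop) (S : Set M) : Prop :=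
  ∀ x ∈ S, ∀ y, leafRel x y → y ∈ S

/-- A minimal set of the foliation. -/
def IsMinimalSet (leafRel : M → M → Prop) (S : Set M) : Prop :=
  S.Nonempty ∧ IsClosed S ∧ Saturated leafRel S ∧
    ∀ T ⊆ S, T.Nonempty → IsClosed T → Saturated leafRel T → T = S

/-- The data of covering uniformizations of the leaves: for each `x`, `cover x` maps the
unit disc onto the leaf through `x`, continuously, sending `0` to `x`. -/
def IsLeafCover (leafRel : M → M → Prop) (cover : M → ℂ → M) : Prop :=
  (∀ x, cover x 0 = x) ∧
  (∀ x, ∀ z ∈ uD, leafRel x (cover x z)) ∧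
  (∀ x y, leafRel x y → ∃ z ∈ uD, cover x z = y) ∧
  (∀ x, ContinuousOn (cover x) uD)

/-- `f` is a continuous leafwise harmonic function. -/
def LeafwiseHarmonic (cover : M → ℂ → M) (f : M → ℝ) : Prop :=
  Continuous f ∧ ∀ x, IsHarmRD (fun z => f (cover x z))

end Foliated

/-- a minimal compact leafwise-Riemannian foliated space (no proper
nonempty closed saturated subset, i.e. every leaf dense) is harmonically simple. -/
theorem stmt5 (M : Type) [TopologicalSpace M] [CompactSpace M]
    (leafRel : M → M → Prop) (hrel : Equivalence leafRel)
    (cover : M → ℂ → M) (hcov : IsLeafCover leafRel cover)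
    (hmin : ∀ S : Set M, IsClosed S → Saturated leafRel S → S.Nonempty → S = Set.univ) :
    ∀ f : M → ℝ, LeafwiseHarmonic cover f →
      ∀ x y, leafRel x y → f x = f y := by
  intro f hf x y hxy
  have hne : (Set.univ : Set M).Nonempty := ⟨x, trivial⟩
  obtain ⟨x₀, -, hx₀⟩ := isCompact_univ.exists_isMaxOn hne hf.1.continuousOn
  have hmax : ∀ w, f w ≤ f x₀ := fun w => hx₀ (mem_univ w)
  set S : Set M := {w : M | f w = f x₀} with hS
  have hSclosed : IsClosed S := isClosed_eq hf.1 continuous_const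
  have hSsat : Saturated leafRel S := by
    intro w hw v hwv
    have hle : ∀ z ∈ uD, (fun z => f (cover w z)) z ≤ (fun z => f (cover w z)) 0 := by
      intro z _
      simp only [hcov.1 w]
      have : f w = f x₀ := hw
      calc f (cover w z) ≤ f x₀ := hmax _
        _ = f w := this.symm
    have heq := harm_eqOn_max (hf.2 w) hle
    obtain ⟨z₀, hz₀D, hz₀⟩ := hcov.2.2.1 w v hwv
    have h1 := heq z₀ hz₀D
    simp only [hz₀, hcov.1 w] at h1
    show f v = f x₀
    rw [h1, hw]
  have hSuniv := hmin S hSclosed hSsat ⟨x₀, rfl⟩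
  have hall : ∀ w, f w = f x₀ := fun w => show w ∈ S from hSuniv.symm ▸ mem_univ w
  rw [hall x, hall y]
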